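/- Let n = 2m+1 ≥ 3 be odd. With h = ∑_{i=1}^n (−1)^{i+1} E_{ii} and, for 1 ≤ k ≤ m, e_k = ∑_{l=1}^{m−k+1} (E_{2l−1, 2k+2l−2} − E_{2k+2l−1, 2l}) in M_n(ℂ), the following commutator relations hold: h·e_k − e_k·h = 2·e_k for all 1 ≤ k ≤ m, and e_k·e_{k'} − e_{k'}·e_k = 0 for all 1 ≤ k, k' ≤ m. -/

import Mathlib

open Matrix

/-- `h = ∑_{i=1}^n (-1)^{i+1} E_{ii}` (written with 0-indexed `i`). -/
noncomputable def hMat (n : ℕ) : Matrix (Fin n) (Fin n) ℂ :=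
  ∑ i : Fin n, ((-1 : ℂ)) ^ (i : ℕ) • Matrix.single i i 1

/-- For `n = 2m+1` odd and `1 ≤ k ≤ m`,
`e_k = ∑_{l=1}^{m-k+1} (E_{2l-1, 2k+2l-2} - E_{2k+2l-1, 2l})` (1-indexed entries). -/
noncomputable def eMatOdd (m k : ℕ) : Matrix (Fin (2 * m + 1)) (Fin (2 * m + 1)) ℂ :=
  if h : 1 ≤ k ∧ k ≤ m then
    ∑ l : Fin (m - k + 1),
      (Matrix.single
          (⟨2 * l.1, by have := l.2; omega⟩ : Fin (2 * m + 1))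
          (⟨2 * k + 2 * l.1 - 1, by have := l.2; omega⟩ : Fin (2 * m + 1)) 1 -
        Matrix.single
          (⟨2 * k + 2 * l.1, by have := l.2; omega⟩ : Fin (2 * m + 1))
          (⟨2 * l.1 + 1, by have := l.2; omega⟩ : Fin (2 * m + 1)) 1)
  else 0

lemma hMat_eq_diagonal (n : ℕ) :
    hMat n = Matrix.diagonal (fun i : Fin n => ((-1 : ℂ)) ^ (i : ℕ)) := by
  ext a b
  simp only [hMat, Matrix.sum_apply, Matrix.smul_apply, Matrix.single,
    Matrix.of_apply, Matrix.diagonal_apply, smul_eq_mul]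
  rw [Finset.sum_eq_single a]
  · by_cases h : a = b <;> simp [h, eq_comm]
  · intro i _ hi
    rw [if_neg, mul_zero]
    rintro ⟨h', -⟩
    exact hi h'
  · simp

lemma eMat_zero (m k : ℕ) (a b : Fin (2 * m + 1))
    (h : a.1 % 2 = 1 ∨ b.1 % 2 = 0) : eMatOdd m k a b = 0 := by
  unfold eMatOdd
  split
  · next hk =>
    rw [Matrix.sum_apply]
    apply Finset.sum_eq_zero
    intro l _
    simp only [Matrix.sub_apply, Matrix.single, Matrix.of_apply]
    rw [if_neg, if_neg, sub_zero]
    · rintro ⟨h1, h2⟩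
      have e1 : a.1 = 2 * k + 2 * l.1 := by rw [← h1]
      have e2 : b.1 = 2 * l.1 + 1 := by rw [← h2]
      omega
    · rintro ⟨h1, h2⟩
      have e1 : a.1 = 2 * l.1 := by rw [← h1]
      have e2 : b.1 = 2 * k + 2 * l.1 - 1 := by rw [← h2]
      have hk1 := hk.1
      omega
  · rfl

theorem stmt_11 (m : ℕ) (hm : 1 ≤ m) :
    (∀ k, 1 ≤ k → k ≤ m →
      hMat (2 * m + 1) * eMatOdd m k - eMatOdd m k * hMat (2 * m + 1) =
        (2 : ℂ) • eMatOdd m k) ∧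
    (∀ k k', 1 ≤ k → k ≤ m → 1 ≤ k' → k' ≤ m →
      eMatOdd m k * eMatOdd m k' - eMatOdd m k' * eMatOdd m k = 0) := by
  have hmul : ∀ k k', eMatOdd m k * eMatOdd m k' = 0 := by
    intro k k'
    ext a b
    rw [Matrix.mul_apply, Matrix.zero_apply]
    apply Finset.sum_eq_zero
    intro c _
    rcases Nat.even_or_odd c.1 with hc | hc
    · rw [eMat_zero m k a c (Or.inr (Nat.even_iff.mp hc)), zero_mul]
    · rw [eMat_zero m k' c b (Or.inl (Nat.odd_iff.mp hc)), mul_zero]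
  constructor
  · intro k hk1 hk2
    ext a b
    rw [hMat_eq_diagonal, Matrix.sub_apply, Matrix.diagonal_mul, Matrix.mul_diagonal,
      Matrix.smul_apply, smul_eq_mul]
    rcases Nat.even_or_odd a.1 with ha | ha
    · rcases Nat.even_or_odd b.1 with hb | hb
      · rw [eMat_zero m k a b (Or.inr (Nat.even_iff.mp hb))]; ring
      · rw [ha.neg_one_pow, hb.neg_one_pow]; ring
    · rw [eMat_zero m k a b (Or.inl (Nat.odd_iff.mp ha))]; ring
  · intro k k' _ _ _ _
    rw [hmul, hmul, sub_zero]
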